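/- If a two-sided homogeneous solution h(k) of the matrix recurrence h(k+1) = C_{m,n}(k) h(k) satisfies both the initial regularity condition a_n(0) h₂(0) + m h₁(0) = 0 and the boundary condition that h(∞) := lim_{k→∞} h(k) is a scalar multiple of K(∞), where I(k) and K(k) are linearly independent solutions with I(0) proportional to (−1, m/a_n(0)) and I(∞), K(∞) linearly independent, then h(k) = 0 for all k. -/

import Mathlib

open Matrix Filter

theorem stmt_18 (a : ℕ → ℕ → ℝ) (ha : ∀ n k, 0 < a n k)
    (m : ℤ) (n : ℕ)
    (C : ℕ → Matrix (Fin 2) (Fin 2) ℝ)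
    (hCinv : ∀ k, IsUnit (C k))
    (I K : ℕ → Fin 2 → ℝ) (Iinf Kinf : Fin 2 → ℝ)
    (hIrec : ∀ k, I (k + 1) = C k *ᵥ I k)
    (hKrec : ∀ k, K (k + 1) = C k *ᵥ K k)
    (hI0 : I 0 = ![(-1 : ℝ), (m : ℝ) / a n 0])
    (hIK : ∀ k, LinearIndependent ℝ ![I k, K k])
    (hIlim : Tendsto I atTop (nhds Iinf))
    (hKlim : Tendsto K atTop (nhds Kinf))
    (hIKinf : LinearIndependent ℝ ![Iinf, Kinf])
    (h : ℕ → Fin 2 → ℝ) (hinf : Fin 2 → ℝ)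
    (hrec : ∀ k, h (k + 1) = C k *ᵥ h k)
    (hinit : a n 0 * h 0 1 + (m : ℝ) * h 0 0 = 0)
    (hlim : Tendsto h atTop (nhds hinf))
    (hbc : ∃ β : ℝ, hinf = β • Kinf) :
    ∀ k, h k = 0 := by
  obtain ⟨β, hβ⟩ := hbc
  set α : ℝ := -(h 0 0) with hα
  have ha0 : a n 0 ≠ 0 := (ha n 0).ne'
  -- h 0 = α • I 0
  have h0 : h 0 = α • I 0 := by
    funext i
    fin_cases i
    · simp [hI0, hα]
    · simp only [hI0, Pi.smul_apply, hα]
      show h 0 1 = -(h 0 0) • ((m : ℝ) / a n 0)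
      field_simp
      rw [smul_eq_mul, mul_div_assoc', eq_div_iff ha0]; linarith [hinit]
  -- h k = α • I k for all k
  have hk : ∀ k, h k = α • I k := by
    intro k
    induction k with
    | zero => exact h0
    | succ k ih => rw [hrec, hIrec, ih, Matrix.mulVec_smul]
  -- take limits
  have hlim2 : Tendsto h atTop (nhds (α • Iinf)) := by
    have : Tendsto (fun k => α • I k) atTop (nhds (α • Iinf)) := hIlim.const_smul α
    exact this.congr (fun k => (hk k).symm)
  have hinfeq : hinf = α • Iinf := tendsto_nhds_unique hlim hlim2
  have key : α • Iinf + (-β) • Kinf = 0 := by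
    rw [← hinfeq, hβ]; simp [neg_smul]
  have hα0 : α = 0 := by
    rcases (LinearIndependent.pair_iff.mp hIKinf) α (-β) key with ⟨h1, _⟩
    exact h1
  intro k
  rw [hk k, hα0, zero_smul]
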